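/- Consider a random bipartite-edge model where each of the n = √n × √n grid positions independently contains a nonzero entry with probability a/√n, for a constant 0 < a < 1. Then the probability that there exists a closed 'obstructing cycle' — a sequence of distinct positions p₁, q₁, p₂, q₂, …, p_{t−1}, q_{t−1} with p₁ = p_t, where for each i, p_i and q_i share a column and q_i and p_{i+1} share a row, for some t ≥ 3 — is at most a⁴/(1−a²). -/

import Mathlib

open MeasureTheory
open scoped ENNReal

lemma meas_forall_true (s : ℕ) (p : ℝ≥0∞) (hp : p ≤ 1) (S : Finset (Fin s × Fin s)) :
    (Measure.pi fun _ : Fin s × Fin s => (PMF.bernoulli p.toNNReal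
        (by simpa using ENNReal.toNNReal_mono ENNReal.one_ne_top hp)).toMeasure)
      {x : Fin s × Fin s → Bool | ∀ j ∈ S, x j = true} = p ^ S.card := by
  have hset : {x : Fin s × Fin s → Bool | ∀ j ∈ S, x j = true}
      = Set.pi Set.univ (fun j => if j ∈ S then ({true} : Set Bool) else Set.univ) := by
    ext x
    simp only [Set.mem_setOf_eq, Set.mem_pi, Set.mem_univ, forall_true_left]
    constructor
    · intro h j; split_ifs with hj
      · exact h j hj
      · trivial
    · intro h j hj; have := h j; rw [if_pos hj] at this; exact this
  rw [hset, Measure.pi_pi]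
  have hone : ∀ j : Fin s × Fin s,
      (PMF.bernoulli p.toNNReal
        (by simpa using ENNReal.toNNReal_mono ENNReal.one_ne_top hp)).toMeasure (if j ∈ S then ({true} : Set Bool) else Set.univ)
      = if j ∈ S then p else 1 := by
    intro j; split_ifs
    · rw [PMF.toMeasure_apply_singleton _ _ (measurableSet_singleton _)]
      simp [PMF.bernoulli, ENNReal.coe_toNNReal (ne_top_of_le_ne_top ENNReal.one_ne_top hp)]
    · exact measure_univ
  simp_rw [hone]
  rw [Finset.prod_ite_mem, Finset.univ_inter, Finset.prod_const]

noncomputable def Cset (s : ℕ) (m : ℕ) (rc : (ZMod (m+2) → Fin s) × (ZMod (m+2) → Fin s)) :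
    Set (Fin s × Fin s → Bool) :=
  {x | Function.Injective (Sum.elim (fun i => (rc.1 (i-1), rc.2 i))
        (fun i : ZMod (m+2) => (rc.1 i, rc.2 i))) ∧
      ∀ i : ZMod (m+2), x (rc.1 (i-1), rc.2 i) = true ∧ x (rc.1 i, rc.2 i) = true}

lemma meas_Cset (s : ℕ) (p : ℝ≥0∞) (hp : p ≤ 1) (m : ℕ)
    (rc : (ZMod (m+2) → Fin s) × (ZMod (m+2) → Fin s)) :
    (Measure.pi fun _ : Fin s × Fin s => (PMF.bernoulli p.toNNReal
        (by simpa using ENNReal.toNNReal_mono ENNReal.one_ne_top hp)).toMeasure) (Cset s m rc)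
      ≤ p ^ (2 * (m + 2)) := by
  by_cases hinj : Function.Injective (Sum.elim (fun i => (rc.1 (i-1), rc.2 i))
      (fun i : ZMod (m+2) => (rc.1 i, rc.2 i)))
  · set f := Sum.elim (fun i => (rc.1 (i-1), rc.2 i))
      (fun i : ZMod (m+2) => (rc.1 i, rc.2 i)) with hf
    have hsub : Cset s m rc ⊆ {x | ∀ j ∈ Finset.image f Finset.univ, x j = true} := by
      rintro x ⟨-, hx⟩ j hj
      simp only [Finset.mem_image, Finset.mem_univ, true_and] at hj
      obtain ⟨i, rfl⟩ := hj
      cases i with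
      | inl i => exact (hx i).1
      | inr i => exact (hx i).2
    calc _ ≤ _ := measure_mono hsub
    _ = p ^ (Finset.image f Finset.univ).card := meas_forall_true s p hp _
    _ = p ^ (2 * (m + 2)) := by
        rw [Finset.card_image_of_injective _ hinj]
        simp [Fintype.card_sum, ZMod.card, two_mul]
  · have : Cset s m rc = ∅ := by
      ext x; simp only [Cset, Set.mem_setOf_eq, Set.mem_empty_iff_false, iff_false]
      rintro ⟨h, -⟩; exact hinj h
    simp [this]

/-- In the Bernoulli model where each position of the √n × √n grid (here
`s = √n`) is independently active with probability `a/√n` (0 < a < 1), the probability that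
there exists a closed obstructing cycle — distinct positions p₁,q₁,…,p_{t−1},q_{t−1}
(here indexed cyclically by `ZMod ℓ` with `ℓ = t − 1 ≥ 2`) where each pᵢ and qᵢ share a
column and each qᵢ and p_{i+1} share a row, with all positions active — is at most
`a⁴/(1−a²)`. -/
theorem stmt4 (s : ℕ) (hs : 0 < s) (a : ℝ) (ha0 : 0 < a) (ha1 : a < 1)
    (p : ℝ≥0∞) (hp : p ≤ 1) (hpa : p = ENNReal.ofReal (a / s)) :
    (Measure.pi fun _ : Fin s × Fin s => (PMF.bernoulli p.toNNReal
        (by simpa using ENNReal.toNNReal_mono ENNReal.one_ne_top hp)).toMeasure)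
      {x : Fin s × Fin s → Bool |
        ∃ ℓ : ℕ, 2 ≤ ℓ ∧
          ∃ P Q : ZMod ℓ → Fin s × Fin s,
            Function.Injective (Sum.elim P Q) ∧
            (∀ i, (P i).2 = (Q i).2) ∧
            (∀ i, (Q i).1 = (P (i + 1)).1) ∧
            (∀ i, x (P i) = true ∧ x (Q i) = true)}
      ≤ ENNReal.ofReal (a ^ 4 / (1 - a ^ 2)) := by
  set μ := Measure.pi fun _ : Fin s × Fin s => (PMF.bernoulli p.toNNReal
        (by simpa using ENNReal.toNNReal_mono ENNReal.one_ne_top hp)).toMeasure with hμ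
  have hsub : {x : Fin s × Fin s → Bool |
        ∃ ℓ : ℕ, 2 ≤ ℓ ∧
          ∃ P Q : ZMod ℓ → Fin s × Fin s,
            Function.Injective (Sum.elim P Q) ∧
            (∀ i, (P i).2 = (Q i).2) ∧
            (∀ i, (Q i).1 = (P (i + 1)).1) ∧
            (∀ i, x (P i) = true ∧ x (Q i) = true)}
      ⊆ ⋃ (m : ℕ) (rc : (ZMod (m+2) → Fin s) × (ZMod (m+2) → Fin s)), Cset s m rc := by
    rintro x ⟨ℓ, hℓ, P, Q, hinj, hcol, hrow, hact⟩
    obtain ⟨m, rfl⟩ : ∃ m, ℓ = m + 2 := ⟨ℓ - 2, by omega⟩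
    refine Set.mem_iUnion.2 ⟨m, Set.mem_iUnion.2
      ⟨(fun i => (Q i).1, fun i => (P i).2), ?_⟩⟩
    have hP : ∀ i : ZMod (m+2), ((Q (i-1)).1, (P i).2) = P i := by
      intro i
      have := hrow (i - 1)
      rw [sub_add_cancel] at this
      rw [this]
    have hQ : ∀ i : ZMod (m+2), ((Q i).1, (P i).2) = Q i := by
      intro i; rw [hcol i]
    constructor
    · have : (Sum.elim (fun i => ((Q (i-1)).1, (P i).2))
          (fun i : ZMod (m+2) => ((Q i).1, (P i).2))) = Sum.elim P Q := by
        funext j; cases j with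
        | inl i => simp [hP i]
        | inr i => simp [hQ i]
      simpa [this] using hinj
    · intro i
      rw [hP i, hQ i]
      exact hact i
  calc μ _ ≤ μ (⋃ (m : ℕ) (rc : (ZMod (m+2) → Fin s) × (ZMod (m+2) → Fin s)), Cset s m rc) :=
        measure_mono hsub
    _ ≤ ∑' (m : ℕ), μ (⋃ (rc : (ZMod (m+2) → Fin s) × (ZMod (m+2) → Fin s)), Cset s m rc) :=
        measure_iUnion_le _
    _ ≤ ∑' (m : ℕ), ∑' (rc : (ZMod (m+2) → Fin s) × (ZMod (m+2) → Fin s)), μ (Cset s m rc) :=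
        ENNReal.tsum_le_tsum fun m => measure_iUnion_le _
    _ ≤ ∑' (m : ℕ), ∑' (_ : (ZMod (m+2) → Fin s) × (ZMod (m+2) → Fin s)), p ^ (2 * (m + 2)) :=
        ENNReal.tsum_le_tsum fun m => ENNReal.tsum_le_tsum fun rc => meas_Cset s p hp m rc
    _ = ∑' (m : ℕ), (s : ℝ≥0∞) ^ (2 * (m + 2)) * p ^ (2 * (m + 2)) := by
        congr 1; funext m
        rw [tsum_fintype, Finset.sum_const, Finset.card_univ]
        simp only [Fintype.card_prod, Fintype.card_fun, ZMod.card, Fintype.card_fin,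
          nsmul_eq_mul]
        push_cast
        ring
    _ = ∑' (m : ℕ), (ENNReal.ofReal a) ^ (2 * (m + 2)) := by
        congr 1; funext m
        rw [← mul_pow]
        congr 1
        rw [hpa, ← ENNReal.ofReal_natCast s, ← ENNReal.ofReal_mul (by positivity)]
        congr 1
        field_simp
    _ ≤ ENNReal.ofReal (a ^ 4 / (1 - a ^ 2)) := by
        set b := ENNReal.ofReal a with hb
        have h1 : ∀ m : ℕ, b ^ (2 * (m + 2)) = b ^ 4 * (b ^ 2) ^ m := by
          intro m; rw [← pow_mul]; ring
        simp_rw [h1]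
        rw [ENNReal.tsum_mul_left, ENNReal.tsum_geometric]
        have ha2 : a ^ 2 ≤ 1 := by nlinarith
        have h2 : (1 : ℝ≥0∞) - b ^ 2 = ENNReal.ofReal (1 - a ^ 2) := by
          rw [← ENNReal.ofReal_pow ha0.le, ENNReal.ofReal_sub _ (by positivity),
            ENNReal.ofReal_one]
        rw [h2, ENNReal.ofReal_div_of_pos (by nlinarith), ← ENNReal.ofReal_pow ha0.le,
          div_eq_mul_inv]
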